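/- Let S₃ : (ℝ⁴)×(ℝ²)×(ℝ²) → ℝ be the trilinear form S₃(x,y,z) = (z₁+z₂)(x₁y₁+x₁y₂+x₂y₁−x₂y₂) + (z₁−z₂)(x₃y₁+x₃y₂+x₄y₁−x₄y₂). Then the operator norm of S₃ with respect to sup norms equals 4. -/

import Mathlib

set_option maxSynthPendingDepth 3

theorem stmt5
    (S : (PiLp ⊤ fun _ : Fin 4 => ℝ) →L[ℝ] (PiLp ⊤ fun _ : Fin 2 => ℝ) →L[ℝ]
      (PiLp ⊤ fun _ : Fin 2 => ℝ) →L[ℝ] ℝ)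
    (hS : ∀ (x : PiLp ⊤ fun _ : Fin 4 => ℝ) (y z : PiLp ⊤ fun _ : Fin 2 => ℝ),
      S x y z = (z 0 + z 1) * (x 0 * y 0 + x 0 * y 1 + x 1 * y 0 - x 1 * y 1)
        + (z 0 - z 1) * (x 2 * y 0 + x 2 * y 1 + x 3 * y 0 - x 3 * y 1)) :
    ‖S‖ = 4 := by
  have coord4 : ∀ (x : PiLp ⊤ fun _ : Fin 4 => ℝ) (i : Fin 4), |x i| ≤ ‖x‖ := by
    intro x i
    simpa using norm_le_pi_norm (WithLp.equiv ⊤ (Fin 4 → ℝ) x) i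
  have coord2 : ∀ (x : PiLp ⊤ fun _ : Fin 2 => ℝ) (i : Fin 2), |x i| ≤ ‖x‖ := by
    intro x i
    simpa using norm_le_pi_norm (WithLp.equiv ⊤ (Fin 2 → ℝ) x) i
  have key2 : ∀ (y : PiLp ⊤ fun _ : Fin 2 => ℝ), |y 0 + y 1| + |y 0 - y 1| ≤ 2 * ‖y‖ := by
    intro y
    have h0 := abs_le.mp (coord2 y 0)
    have h1 := abs_le.mp (coord2 y 1)
    cases abs_cases (y 0 + y 1) <;> cases abs_cases (y 0 - y 1) <;> linarith [h0.1, h0.2, h1.1, h1.2]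
  apply le_antisymm
  · apply ContinuousLinearMap.opNorm_le_bound _ (by norm_num)
    intro x
    apply ContinuousLinearMap.opNorm_le_bound _ (by positivity)
    intro y
    apply ContinuousLinearMap.opNorm_le_bound _ (by positivity)
    intro z
    rw [hS]
    have hx0 := coord4 x 0; have hx1 := coord4 x 1
    have hx2 := coord4 x 2; have hx3 := coord4 x 3
    have hy := key2 y
    have hz := key2 z
    have hynn : (0:ℝ) ≤ ‖y‖ := norm_nonneg _
    have hA : |x 0 * y 0 + x 0 * y 1 + x 1 * y 0 - x 1 * y 1| ≤ 2 * ‖x‖ * ‖y‖ := by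
      have he : x 0 * y 0 + x 0 * y 1 + x 1 * y 0 - x 1 * y 1
          = x 0 * (y 0 + y 1) + x 1 * (y 0 - y 1) := by ring
      rw [he]
      calc |x 0 * (y 0 + y 1) + x 1 * (y 0 - y 1)|
          ≤ |x 0| * |y 0 + y 1| + |x 1| * |y 0 - y 1| := by
            simpa [abs_mul] using abs_add_le (x 0 * (y 0 + y 1)) (x 1 * (y 0 - y 1))
        _ ≤ ‖x‖ * |y 0 + y 1| + ‖x‖ * |y 0 - y 1| := by
            gcongr <;> positivity
        _ = ‖x‖ * (|y 0 + y 1| + |y 0 - y 1|) := by ring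
        _ ≤ ‖x‖ * (2 * ‖y‖) := by gcongr
        _ = 2 * ‖x‖ * ‖y‖ := by ring
    have hB : |x 2 * y 0 + x 2 * y 1 + x 3 * y 0 - x 3 * y 1| ≤ 2 * ‖x‖ * ‖y‖ := by
      have he : x 2 * y 0 + x 2 * y 1 + x 3 * y 0 - x 3 * y 1
          = x 2 * (y 0 + y 1) + x 3 * (y 0 - y 1) := by ring
      rw [he]
      calc |x 2 * (y 0 + y 1) + x 3 * (y 0 - y 1)|
          ≤ |x 2| * |y 0 + y 1| + |x 3| * |y 0 - y 1| := by
            simpa [abs_mul] using abs_add_le (x 2 * (y 0 + y 1)) (x 3 * (y 0 - y 1))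
        _ ≤ ‖x‖ * |y 0 + y 1| + ‖x‖ * |y 0 - y 1| := by gcongr <;> positivity
        _ = ‖x‖ * (|y 0 + y 1| + |y 0 - y 1|) := by ring
        _ ≤ ‖x‖ * (2 * ‖y‖) := by gcongr
        _ = 2 * ‖x‖ * ‖y‖ := by ring
    calc ‖(z 0 + z 1) * (x 0 * y 0 + x 0 * y 1 + x 1 * y 0 - x 1 * y 1)
        + (z 0 - z 1) * (x 2 * y 0 + x 2 * y 1 + x 3 * y 0 - x 3 * y 1)‖
        ≤ |z 0 + z 1| * |x 0 * y 0 + x 0 * y 1 + x 1 * y 0 - x 1 * y 1|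
          + |z 0 - z 1| * |x 2 * y 0 + x 2 * y 1 + x 3 * y 0 - x 3 * y 1| := by
          simpa [abs_mul, Real.norm_eq_abs] using abs_add_le
            ((z 0 + z 1) * (x 0 * y 0 + x 0 * y 1 + x 1 * y 0 - x 1 * y 1))
            ((z 0 - z 1) * (x 2 * y 0 + x 2 * y 1 + x 3 * y 0 - x 3 * y 1))
      _ ≤ |z 0 + z 1| * (2 * ‖x‖ * ‖y‖) + |z 0 - z 1| * (2 * ‖x‖ * ‖y‖) := by
          gcongr <;> positivity
      _ = (|z 0 + z 1| + |z 0 - z 1|) * (2 * ‖x‖ * ‖y‖) := by ring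
      _ ≤ (2 * ‖z‖) * (2 * ‖x‖ * ‖y‖) := by gcongr
      _ = 4 * ‖x‖ * ‖y‖ * ‖z‖ := by ring
  · set x₀ : PiLp ⊤ fun _ : Fin 4 => ℝ := (WithLp.equiv ⊤ (Fin 4 → ℝ)).symm ![1,1,1,1] with hx₀
    set y₀ : PiLp ⊤ fun _ : Fin 2 => ℝ := (WithLp.equiv ⊤ (Fin 2 → ℝ)).symm ![1,0] with hy₀
    set z₀ : PiLp ⊤ fun _ : Fin 2 => ℝ := (WithLp.equiv ⊤ (Fin 2 → ℝ)).symm ![1,0] with hz₀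
    have hxn : ‖x₀‖ ≤ 1 := by
      rw [hx₀, WithLp.equiv_symm_apply, PiLp.norm_toLp]
      apply pi_norm_le_iff_of_nonneg (by norm_num) |>.2
      intro i; fin_cases i <;> simp
    have hyn : ‖y₀‖ ≤ 1 := by
      rw [hy₀, hz₀, WithLp.equiv_symm_apply, PiLp.norm_toLp]
      apply pi_norm_le_iff_of_nonneg (by norm_num) |>.2
      intro i; fin_cases i <;> simp
    have hzn : ‖z₀‖ ≤ 1 := by
      rw [hz₀, WithLp.equiv_symm_apply, PiLp.norm_toLp]
      apply pi_norm_le_iff_of_nonneg (by norm_num) |>.2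
      intro i; fin_cases i <;> simp
    have hval : S x₀ y₀ z₀ = 4 := by
      rw [hS]
      have e0 : x₀ 0 = 1 := rfl
      have e1 : x₀ 1 = 1 := rfl
      have e2 : x₀ 2 = 1 := rfl
      have e3 : x₀ 3 = 1 := rfl
      have f0 : y₀ 0 = 1 := rfl
      have f1 : y₀ 1 = 0 := rfl
      have g0 : z₀ 0 = 1 := rfl
      have g1 : z₀ 1 = 0 := rfl
      simp only [e0, e1, e2, e3, f0, f1, g0, g1]; norm_num
    have h : (4:ℝ) ≤ ‖S‖ * ‖x₀‖ * ‖y₀‖ * ‖z₀‖ := by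
      calc (4:ℝ) = ‖S x₀ y₀ z₀‖ := by rw [hval]; norm_num
        _ ≤ ‖S x₀ y₀‖ * ‖z₀‖ := (S x₀ y₀).le_opNorm z₀
        _ ≤ (‖S x₀‖ * ‖y₀‖) * ‖z₀‖ := by gcongr; exact (S x₀).le_opNorm y₀
        _ ≤ ((‖S‖ * ‖x₀‖) * ‖y₀‖) * ‖z₀‖ := by gcongr; exact S.le_opNorm x₀
        _ = ‖S‖ * ‖x₀‖ * ‖y₀‖ * ‖z₀‖ := by ring
    have hn0 : (0:ℝ) ≤ ‖S‖ := norm_nonneg _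
    have s1 : ‖S‖ * ‖x₀‖ * ‖y₀‖ * ‖z₀‖ ≤ ‖S‖ * ‖x₀‖ * ‖y₀‖ :=
      mul_le_of_le_one_right (by positivity) hzn
    have s2 : ‖S‖ * ‖x₀‖ * ‖y₀‖ ≤ ‖S‖ * ‖x₀‖ :=
      mul_le_of_le_one_right (by positivity) hyn
    have s3 : ‖S‖ * ‖x₀‖ ≤ ‖S‖ := mul_le_of_le_one_right hn0 hxn
    linarith
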